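/- Let O be a valuation ring in an algebraically closed field L of characteristic zero, with valuation v taking values in a totally ordered abelian group. Let P(X) = Σ_s a_s X^s ∈ L[X] be a polynomial whose coefficients satisfy: a_i · a_j ≠ 0 for some indices i < j, and (j−i)·v(a_s) ≥ (j−s)·v(a_i) − (i−s)·v(a_j) for every s with a_s ≠ 0. Then there exists z ∈ L with P(z) = 0 and (j−i)·v(z) = v(a_i) − v(a_j). -/

import Mathlib

open Polynomial Multiset

namespace NewtonAux

variable {L : Type*} [Field L] {Γ₀ : Type*} [LinearOrderedCommGroupWithZero Γ₀]
  (v : Valuation L Γ₀)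

lemma mul_lt_mul_of_lt_of_le₀ {a b c d : Γ₀} (hab : a ≤ b) (hb : b ≠ 0) (hcd : c < d) :
    a * c < b * d :=
  calc a * c ≤ b * c := mul_le_mul_left hab c
    _ < b * d := mul_lt_mul_of_pos_left hcd (zero_lt_iff.2 hb)

lemma mul_lt_mul_left₀' {a b c : Γ₀} (ha : a ≠ 0) (h : b < c) : a * b < a * c :=
  mul_lt_mul_of_lt_of_le₀ (le_refl a) ha h

lemma mul_lt_mul_right₀' {a b c : Γ₀} (ha : a ≠ 0) (h : b < c) : b * a < c * a := by
  rw [mul_comm b a, mul_comm c a]; exact mul_lt_mul_left₀' ha h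

lemma lt_of_pow_lt_pow {a b : Γ₀} {e : ℕ} (h : a ^ e < b ^ e) : a < b :=
  lt_of_not_ge fun hba => (pow_le_pow_left' hba e).not_gt h

lemma vprod_eq (M : Multiset L) : v M.prod = (M.map v).prod := by
  induction M using Multiset.induction with
  | empty => simp
  | cons a M ih => simp [ih]

lemma pow_prod_le {e : ℕ} {c : Γ₀} {M : Multiset L}
    (h : ∀ x ∈ M, v x ^ e ≤ c) : ((M.map v).prod) ^ e ≤ c ^ Multiset.card M := by
  induction M using Multiset.induction with
  | empty => simp
  | cons a M ih =>
    simp only [Multiset.map_cons, Multiset.prod_cons, Multiset.card_cons, mul_pow, pow_succ]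
    rw [mul_comm (c ^ Multiset.card M) c]
    exact mul_le_mul' (h a (Multiset.mem_cons_self a M))
      (ih fun x hx => h x (Multiset.mem_cons_of_mem hx))

lemma pow_le_prod {e : ℕ} {c : Γ₀} {M : Multiset L}
    (h : ∀ x ∈ M, c ≤ v x ^ e) : c ^ Multiset.card M ≤ ((M.map v).prod) ^ e := by
  induction M using Multiset.induction with
  | empty => simp
  | cons a M ih =>
    simp only [Multiset.map_cons, Multiset.prod_cons, Multiset.card_cons, mul_pow, pow_succ]
    rw [mul_comm (c ^ Multiset.card M) c]
    exact mul_le_mul' (h a (Multiset.mem_cons_self a M))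
      (ih fun x hx => h x (Multiset.mem_cons_of_mem hx))

lemma pow_prod_lt {e : ℕ} {c : Γ₀} {M : Multiset L} (hc : c ≠ 0) (hM : M ≠ 0)
    (h : ∀ x ∈ M, v x ^ e < c) : ((M.map v).prod) ^ e < c ^ Multiset.card M := by
  induction M using Multiset.induction with
  | empty => exact absurd rfl hM
  | cons a M ih =>
    rcases eq_or_ne M 0 with rfl | hM0
    · simpa using h a (Multiset.mem_cons_self a 0)
    · simp only [Multiset.map_cons, Multiset.prod_cons, Multiset.card_cons, mul_pow, pow_succ]
      rw [mul_comm (c ^ Multiset.card M) c]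
      exact mul_lt_mul_of_lt_of_le₀ (le_of_lt (h a (Multiset.mem_cons_self a M))) hc
        (ih hM0 fun x hx => h x (Multiset.mem_cons_of_mem hx))

lemma pow_lt_prod {e : ℕ} {c : Γ₀} {M : Multiset L} (hM : M ≠ 0)
    (h : ∀ x ∈ M, c < v x ^ e) : c ^ Multiset.card M < ((M.map v).prod) ^ e := by
  induction M using Multiset.induction with
  | empty => exact absurd rfl hM
  | cons a M ih =>
    have ha := h a (Multiset.mem_cons_self a M)
    have ha0 : v a ^ e ≠ 0 := fun h0 => absurd (h0 ▸ ha) (not_lt.2 zero_le')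
    rcases eq_or_ne M 0 with rfl | hM0
    · simpa using ha
    · simp only [Multiset.map_cons, Multiset.prod_cons, Multiset.card_cons, mul_pow, pow_succ]
      rw [mul_comm (c ^ Multiset.card M) c]
      exact mul_lt_mul_of_lt_of_le₀ (le_of_lt ha) ha0
        (ih hM0 fun x hx => h x (Multiset.mem_cons_of_mem hx))

lemma map_msum_le {f : Γ₀ → Γ₀} (hf : Monotone f) {C : Γ₀}
    {M : Multiset L} (h0 : f 0 ≤ C) (h : ∀ x ∈ M, f (v x) ≤ C) : f (v M.sum) ≤ C := by
  induction M using Multiset.induction with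
  | empty => simpa using h0
  | cons a M ih =>
    rw [Multiset.sum_cons]
    refine le_trans (hf (v.map_add a M.sum)) ?_
    rw [hf.map_max]
    exact max_le (h a (Multiset.mem_cons_self a M))
      (ih fun x hx => h x (Multiset.mem_cons_of_mem hx))

lemma map_msum_lt {f : Γ₀ → Γ₀} (hf : Monotone f) {C : Γ₀}
    {M : Multiset L} (h0 : f 0 < C) (h : ∀ x ∈ M, f (v x) < C) : f (v M.sum) < C := by
  induction M using Multiset.induction with
  | empty => simpa using h0
  | cons a M ih =>
    rw [Multiset.sum_cons]
    refine lt_of_le_of_lt (hf (v.map_add a M.sum)) ?_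
    rw [hf.map_max]
    exact max_lt (h a (Multiset.mem_cons_self a M))
      (ih fun x hx => h x (Multiset.mem_cons_of_mem hx))

end NewtonAux

open NewtonAux

/-- Newton polygon lemma: if the coefficients of `P` satisfy the Newton polygon
condition for indices `i < j`, then `P` has a root `z` with
`(j-i)·v(z) = v(a_i) - v(a_j)` (written multiplicatively). -/
theorem stmt0 {L : Type*} [Field L] [IsAlgClosed L] [CharZero L]
    {Γ₀ : Type*} [LinearOrderedCommGroupWithZero Γ₀]
    (v : Valuation L Γ₀) (P : Polynomial L) (i j : ℕ) (hij : i < j)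
    (hij0 : P.coeff i * P.coeff j ≠ 0)
    (hNewton : ∀ s, P.coeff s ≠ 0 →
      v (P.coeff s) ^ ((j : ℤ) - i) ≤
        v (P.coeff i) ^ ((j : ℤ) - s) * v (P.coeff j) ^ ((s : ℤ) - i)) :
    ∃ z : L, P.eval z = 0 ∧ v z ^ ((j : ℤ) - i) = v (P.coeff i) / v (P.coeff j) := by
  classical
  by_contra hcon
  push_neg at hcon
  have hai : P.coeff i ≠ 0 := left_ne_zero_of_mul hij0
  have haj : P.coeff j ≠ 0 := right_ne_zero_of_mul hij0
  have hP : P ≠ 0 := fun h => hai (by simp [h])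
  set n := P.natDegree with hn
  have hjn : j ≤ n := le_natDegree_of_ne_zero haj
  set e := j - i with he
  have he1 : 1 ≤ e := by omega
  have hcast : ((j : ℤ) - i) = (e : ℤ) := by push_cast; omega
  set τ := v (P.coeff i) / v (P.coeff j) with hτdef
  have hvai : v (P.coeff i) ≠ 0 := v.ne_zero_iff.2 hai
  have hvaj : v (P.coeff j) ≠ 0 := v.ne_zero_iff.2 haj
  have hτ : τ ≠ 0 := div_ne_zero hvai hvaj
  have hsplit : Multiset.card P.roots = n :=
    splits_iff_card_roots.mp (IsAlgClosed.splits P)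
  set R := P.roots with hR
  have hroot : ∀ r ∈ R, v r ^ e ≠ τ := by
    intro r hr
    have hr0 : P.eval r = 0 := isRoot_of_mem_roots hr
    have := hcon r hr0
    rwa [hcast, zpow_natCast] at this
  set pred : L → Prop := fun r => τ < v r ^ e with hpred
  set B := R.filter pred with hB
  set S := R.filter (fun r => ¬ pred r) with hS
  have hBS : B + S = R := Multiset.filter_add_not _ _
  have hBig : ∀ r ∈ B, τ < v r ^ e := fun r hr => (Multiset.mem_filter.mp hr).2
  have hSmall : ∀ r ∈ S, v r ^ e < τ := by
    intro r hr
    obtain ⟨hrR, hnp⟩ := Multiset.mem_filter.mp hr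
    exact lt_of_le_of_ne (not_lt.mp hnp) (hroot r hrR)
  have hBne : ∀ r ∈ B, v r ≠ 0 := by
    intro r hr h0
    have := hBig r hr
    rw [h0, zero_pow (by omega)] at this
    exact absurd this (not_lt.2 zero_le')
  set m := Multiset.card B with hm
  have hcardS : Multiset.card S = n - m := by
    have := congrArg Multiset.card hBS
    rw [Multiset.card_add, hsplit] at this
    omega
  have hmn : m ≤ n := by
    have := congrArg Multiset.card hBS
    rw [Multiset.card_add, hsplit] at this
    omega
  set s0 := n - m with hs0
  set A' : Γ₀ := (B.map v).prod with hA'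
  have hA'0 : A' ≠ 0 := by
    refine Multiset.prod_ne_zero ?_
    intro h0
    obtain ⟨r, hr, hr0⟩ := Multiset.mem_map.mp h0
    exact hBne r hr hr0
  set lc := P.leadingCoeff with hlc
  have hlc0 : v lc ≠ 0 := v.ne_zero_iff.2 (leadingCoeff_ne_zero.mpr hP)
  have hPeq : Polynomial.C lc * (R.map fun r => X - Polynomial.C r).prod = P :=
    C_leadingCoeff_mul_prod_multiset_X_sub_C hsplit
  have hcoeff : ∀ s, P.coeff s = lc * ((R.map fun r => X - Polynomial.C r).prod.coeff s) := by
    intro s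
    conv_lhs => rw [← hPeq]
    rw [coeff_C_mul]
  -- bound on coefficients of the "big part"
  set QB := (B.map fun r => X - Polynomial.C r).prod with hQB
  set QS := (S.map fun r => X - Polynomial.C r).prod with hQS
  have hQRsplit : (R.map fun r => X - Polynomial.C r).prod = QB * QS := by
    rw [← hBS, Multiset.map_add, Multiset.prod_add]
  have hQBdeg : QB.natDegree = m := natDegree_multiset_prod_X_sub_C_eq_card B
  have hQSmonic : QS.Monic := monic_multiset_prod_of_monic _ _ fun r _ => monic_X_sub_C r
  have hQSdeg : QS.natDegree = s0 := by
    rw [hQS, natDegree_multiset_prod_X_sub_C_eq_card, hcardS]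
  have hQScoeff : QS.coeff s0 = 1 := by
    rw [← hQSdeg]; exact hQSmonic.coeff_natDegree
  have hQB0 : v (QB.coeff 0) = A' := by
    rw [coeff_zero_eq_eval_zero, hQB, eval_multiset_prod, Multiset.map_map]
    rw [vprod_eq, Multiset.map_map]
    congr 1
    apply Multiset.map_congr rfl
    intro r _
    simp [Valuation.map_neg]
  -- the subset bound for subsets of B
  have hboundB : ∀ p : ℕ, v (QB.coeff p) ^ e * τ ^ p ≤ A' ^ e := by
    intro p
    rcases le_or_gt p m with hpm | hpm
    · rw [hQB, Multiset.prod_X_sub_C_coeff B (by rw [← hm]; exact hpm)]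
      have hv1 : v ((-1 : L) ^ (Multiset.card B - p)) = 1 := by
        rw [Valuation.map_pow, Valuation.map_neg, Valuation.map_one, one_pow]
      rw [Valuation.map_mul, hv1, one_mul]
      rw [Multiset.esymm]
      refine map_msum_le v (f := fun x => x ^ e * τ ^ p) ?_ ?_ ?_
      · intro x y hxy
        dsimp only
        exact mul_le_mul_left (pow_le_pow_left' hxy e) _
      · show (0:Γ₀) ^ e * τ ^ p ≤ A' ^ e
        rw [zero_pow (by omega), zero_mul]; exact zero_le'
      · intro x hx
        obtain ⟨T, hT, rfl⟩ := Multiset.mem_map.mp hx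
        obtain ⟨hTB, hTcard⟩ := Multiset.mem_powersetCard.mp hT
        rw [vprod_eq]
        have hBsplit : T + (B - T) = B := by
          rw [add_comm]; exact tsub_add_cancel_of_le hTB
        have hcardBT : Multiset.card (B - T) = p := by
          rw [Multiset.card_sub hTB, hTcard, ← hm]; omega
        have hA'eq : A' = (T.map v).prod * ((B - T).map v).prod := by
          conv_lhs => rw [hA', ← hBsplit, Multiset.map_add, Multiset.prod_add]
        have hbig : τ ^ p ≤ (((B - T).map v).prod) ^ e := by
          rw [← hcardBT]
          exact pow_le_prod v fun x hx =>
            le_of_lt (hBig x (Multiset.mem_of_le (Multiset.sub_le_self B T) hx))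
        calc ((T.map v).prod) ^ e * τ ^ p
            ≤ ((T.map v).prod) ^ e * (((B - T).map v).prod) ^ e :=
              mul_le_mul_right hbig _
          _ = A' ^ e := by rw [hA'eq, mul_pow]
    · rw [Polynomial.coeff_eq_zero_of_natDegree_lt (by rw [hQBdeg]; exact hpm)]
      rw [Valuation.map_zero, zero_pow (by omega), zero_mul]
      exact zero_le'
  have hboundS : ∀ q : ℕ, q < s0 → v (QS.coeff q) ^ e < τ ^ (s0 - q) := by
    intro q hq
    rw [hQS, Multiset.prod_X_sub_C_coeff S (by rw [hcardS]; omega)]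
    have hv1 : v ((-1 : L) ^ (Multiset.card S - q)) = 1 := by
      rw [Valuation.map_pow, Valuation.map_neg, Valuation.map_one, one_pow]
    rw [Valuation.map_mul, hv1, one_mul, hcardS]
    have hs0q : (n - m : ℕ) - q = s0 - q := by omega
    rw [hs0q, Multiset.esymm]
    refine map_msum_lt v (f := fun x => x ^ e) ?_ ?_ ?_
    · intro x y hxy; dsimp only; exact pow_le_pow_left' hxy e
    · show (0:Γ₀) ^ e < τ ^ (s0 - q)
      rw [zero_pow (by omega)]
      exact zero_lt_iff.2 (pow_ne_zero _ hτ)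
    · intro x hx
      obtain ⟨T, hT, rfl⟩ := Multiset.mem_map.mp hx
      obtain ⟨hTS, hTcard⟩ := Multiset.mem_powersetCard.mp hT
      rw [vprod_eq, ← hTcard]
      refine pow_prod_lt v hτ ?_ fun x hx => hSmall x (Multiset.mem_of_le hTS hx)
      intro h0
      rw [h0, Multiset.card_zero] at hTcard
      omega
  -- the key equality : v of coefficient s0
  have hvc : v ((R.map fun r => X - Polynomial.C r).prod.coeff s0) = A' := by
    rw [hQRsplit, Polynomial.coeff_mul]
    have hmem : ((0 : ℕ), s0) ∈ Finset.HasAntidiagonal.antidiagonal s0 := by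
      simp [Finset.HasAntidiagonal.mem_antidiagonal]
    rw [← Finset.add_sum_erase _ _ hmem]
    have hrest : v (∑ x ∈ (Finset.HasAntidiagonal.antidiagonal s0).erase (0, s0),
        QB.coeff x.1 * QS.coeff x.2) < A' := by
      refine Valuation.map_sum_lt v hA'0 ?_
      intro x hx
      have hx1 : x ∈ Finset.HasAntidiagonal.antidiagonal s0 := Finset.mem_of_mem_erase hx
      have hxne : x ≠ (0, s0) := Finset.ne_of_mem_erase hx
      have hxadd : x.1 + x.2 = s0 := Finset.HasAntidiagonal.mem_antidiagonal.mp hx1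
      have hx1pos : 1 ≤ x.1 := by
        rcases Nat.eq_zero_or_pos x.1 with h0 | h1
        · exfalso; apply hxne
          ext
          · exact h0
          · omega
        · exact h1
      have hq : x.2 < s0 := by omega
      rw [Valuation.map_mul]
      rcases eq_or_ne (v (QB.coeff x.1)) 0 with h0 | h0
      · rw [h0, zero_mul]; exact zero_lt_iff.2 hA'0
      · have h1 : v (QB.coeff x.1) ^ e * τ ^ x.1 ≤ A' ^ e := hboundB x.1
        have h2 : v (QS.coeff x.2) ^ e < τ ^ x.1 := by
          have := hboundS x.2 hq
          have hxx : s0 - x.2 = x.1 := by omega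
          rwa [hxx] at this
        refine lt_of_pow_lt_pow (e := e) ?_
        calc (v (QB.coeff x.1) * v (QS.coeff x.2)) ^ e
            = v (QB.coeff x.1) ^ e * v (QS.coeff x.2) ^ e := mul_pow _ _ _
          _ < v (QB.coeff x.1) ^ e * τ ^ x.1 :=
              mul_lt_mul_left₀' (pow_ne_zero _ h0) h2
          _ ≤ A' ^ e := h1
    have hmainv : v (QB.coeff 0 * QS.coeff s0) = A' := by
      rw [hQScoeff, mul_one, hQB0]
    rw [Valuation.map_add_eq_of_lt_left v (by rw [hmainv]; exact hrest), hmainv]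
  have hA : v (P.coeff s0) = v lc * A' := by
    rw [hcoeff s0, Valuation.map_mul, hvc]
  have hvA0 : v (P.coeff s0) ≠ 0 := by
    rw [hA]; exact mul_ne_zero hlc0 hA'0
  have has0 : P.coeff s0 ≠ 0 := v.ne_zero_iff.1 hvA0
  -- the strict upper bounds at any index s ≠ s0
  have hstar : ∀ s, s ≤ n → s0 ≠ s →
      v (P.coeff s) ^ e * τ ^ s < v (P.coeff s0) ^ e * τ ^ s0 := by
    intro s hsn hss0
    have hmain : v ((R.map fun r => X - Polynomial.C r).prod.coeff s) ^ e * τ ^ s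
        < A' ^ e * τ ^ s0 := by
      rw [Multiset.prod_X_sub_C_coeff R (by rw [hsplit]; exact hsn)]
      have hv1 : v ((-1 : L) ^ (Multiset.card R - s)) = 1 := by
        rw [Valuation.map_pow, Valuation.map_neg, Valuation.map_one, one_pow]
      rw [Valuation.map_mul, hv1, one_mul, Multiset.esymm]
      refine map_msum_lt v (f := fun x => x ^ e * τ ^ s) ?_ ?_ ?_
      · intro x y hxy
        dsimp only
        exact mul_le_mul_left (pow_le_pow_left' hxy e) _
      · show (0:Γ₀) ^ e * τ ^ s < A' ^ e * τ ^ s0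
        rw [zero_pow (by omega), zero_mul]
        exact zero_lt_iff.2 (mul_ne_zero (pow_ne_zero _ hA'0) (pow_ne_zero _ hτ))
      · intro x hx
        obtain ⟨T, hT, rfl⟩ := Multiset.mem_map.mp hx
        obtain ⟨hTR, hTcard⟩ := Multiset.mem_powersetCard.mp hT
        rw [hsplit] at hTcard
        rw [vprod_eq]
        set TB := T.filter pred with hTB
        set TS := T.filter (fun r => ¬ pred r) with hTS
        have hTsplit : TB + TS = T := Multiset.filter_add_not _ _
        have hTBB : TB ≤ B := by
          rw [hTB, hB]; exact Multiset.filter_le_filter pred hTR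
        have hTSS : TS ≤ S := by
          rw [hTS, hS]; exact Multiset.filter_le_filter _ hTR
        set d1 := Multiset.card TB with hd1
        set d2 := Multiset.card TS with hd2
        have hd12 : d1 + d2 = n - s := by
          have := congrArg Multiset.card hTsplit
          rw [Multiset.card_add, hTcard] at this
          omega
        have hd1m : d1 ≤ m := by
          rw [hd1, hm]; exact Multiset.card_le_card hTBB
        have hBsplit : TB + (B - TB) = B := by
          rw [add_comm]; exact tsub_add_cancel_of_le hTBB
        have hcardBTB : Multiset.card (B - TB) = m - d1 := by
          rw [Multiset.card_sub hTBB]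
        have hu0 : ((TB.map v).prod) ≠ 0 := by
          refine Multiset.prod_ne_zero ?_
          intro h0
          obtain ⟨r, hr, hr0⟩ := Multiset.mem_map.mp h0
          exact hBne r (Multiset.mem_of_le hTBB hr) hr0
        have hTprod : (T.map v).prod = (TB.map v).prod * (TS.map v).prod := by
          rw [← hTsplit, Multiset.map_add, Multiset.prod_add]
        have hA'eq : A' = (TB.map v).prod * ((B - TB).map v).prod := by
          conv_lhs => rw [hA', ← hBsplit, Multiset.map_add, Multiset.prod_add]
        -- main inequality between the "remainder" parts
        have hkey : (TS.map v).prod ^ e * τ ^ s < ((B - TB).map v).prod ^ e * τ ^ s0 := by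
          have hexp : d2 + s = (m - d1) + s0 := by omega
          have hTSle : ((TS.map v).prod) ^ e ≤ τ ^ d2 :=
            pow_prod_le v fun x hx => le_of_lt (hSmall x (Multiset.mem_of_le hTSS hx))
          have hBTge : τ ^ (m - d1) ≤ (((B - TB).map v).prod) ^ e := by
            rw [← hcardBTB]
            exact pow_le_prod v fun x hx =>
              le_of_lt (hBig x (Multiset.mem_of_le (Multiset.sub_le_self B TB) hx))
          have hcase : 1 ≤ d2 ∨ 1 ≤ m - d1 := by omega
          rcases hcase with hc | hc
          · -- TS nonempty : strict on the small side
            have hTSlt : ((TS.map v).prod) ^ e < τ ^ d2 := by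
              refine pow_prod_lt v hτ ?_ fun x hx => hSmall x (Multiset.mem_of_le hTSS hx)
              intro h0
              have hz : d2 = 0 := by rw [hd2, h0, Multiset.card_zero]
              omega
            calc (TS.map v).prod ^ e * τ ^ s < τ ^ d2 * τ ^ s :=
                  mul_lt_mul_right₀' (pow_ne_zero _ hτ) hTSlt
              _ = τ ^ (d2 + s) := by rw [pow_add]
              _ = τ ^ ((m - d1) + s0) := by rw [hexp]
              _ = τ ^ (m - d1) * τ ^ s0 := by rw [pow_add]
              _ ≤ ((B - TB).map v).prod ^ e * τ ^ s0 := mul_le_mul_left hBTge _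
          · -- B - TB nonempty : strict on the big side
            have hBTgt : τ ^ (m - d1) < (((B - TB).map v).prod) ^ e := by
              rw [← hcardBTB]
              refine pow_lt_prod v ?_ fun x hx =>
                hBig x (Multiset.mem_of_le (Multiset.sub_le_self B TB) hx)
              intro h0
              rw [h0, Multiset.card_zero] at hcardBTB
              omega
            calc (TS.map v).prod ^ e * τ ^ s ≤ τ ^ d2 * τ ^ s :=
                  mul_le_mul_left hTSle _
              _ = τ ^ (d2 + s) := by rw [pow_add]
              _ = τ ^ ((m - d1) + s0) := by rw [hexp]
              _ = τ ^ (m - d1) * τ ^ s0 := by rw [pow_add]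
              _ < ((B - TB).map v).prod ^ e * τ ^ s0 :=
                  mul_lt_mul_right₀' (pow_ne_zero _ hτ) hBTgt
        calc (T.map v).prod ^ e * τ ^ s
            = (TB.map v).prod ^ e * ((TS.map v).prod ^ e * τ ^ s) := by
              rw [hTprod, mul_pow, mul_assoc]
          _ < (TB.map v).prod ^ e * (((B - TB).map v).prod ^ e * τ ^ s0) :=
              mul_lt_mul_left₀' (pow_ne_zero _ hu0) hkey
          _ = A' ^ e * τ ^ s0 := by rw [hA'eq, mul_pow, mul_assoc]
    have hcs : v (P.coeff s) = v lc * v ((R.map fun r => X - Polynomial.C r).prod.coeff s) := by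
      rw [hcoeff s, Valuation.map_mul]
    rw [hcs, hA]
    calc (v lc * v ((R.map fun r => X - Polynomial.C r).prod.coeff s)) ^ e * τ ^ s
        = (v lc) ^ e * (v ((R.map fun r => X - Polynomial.C r).prod.coeff s) ^ e * τ ^ s) := by
          rw [mul_pow, mul_assoc]
      _ < (v lc) ^ e * (A' ^ e * τ ^ s0) :=
          mul_lt_mul_left₀' (pow_ne_zero _ hlc0) hmain
      _ = (v lc * A') ^ e * τ ^ s0 := by rw [mul_pow, mul_assoc]
  -- now the final contradiction, in the unit group
  have hs0n : s0 ≤ n := by omega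
  have hN := hNewton s0 has0
  set uα : Γ₀ˣ := Units.mk0 _ hvai with huα
  set uβ : Γ₀ˣ := Units.mk0 _ hvaj with huβ
  set uγ : Γ₀ˣ := Units.mk0 _ hvA0 with huγ
  set ut : Γ₀ˣ := uα * uβ⁻¹ with hut
  have hτu : (ut : Γ₀) = τ := by
    rw [hut, hτdef]
    simp [huα, huβ, div_eq_mul_inv]
  have hNu : uγ ^ ((j : ℤ) - i) ≤ uα ^ ((j : ℤ) - s0) * uβ ^ ((s0 : ℤ) - i) := by
    rw [← Units.val_le_val]
    simp only [Units.val_mul, Units.val_zpow_eq_zpow_val, Units.val_mk0]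
    exact hN
  have tounits : ∀ (x y : Γ₀ˣ) (s t : ℕ), (x : Γ₀) ^ e * τ ^ s < (y : Γ₀) ^ e * τ ^ t →
      x ^ ((j : ℤ) - i) * ut ^ (s : ℤ) < y ^ ((j : ℤ) - i) * ut ^ (t : ℤ) := by
    intro x y s t h
    rw [← Units.val_lt_val]
    simp only [Units.val_mul, Units.val_zpow_eq_zpow_val, Units.val_pow_eq_pow_val,
      hcast, zpow_natCast, hτu]
    exact h
  have key : ∀ (a b : Γ₀ˣ) (p q r : ℤ), a ^ p * b ^ q * (a * b⁻¹) ^ r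
      = a ^ (p + r) * b ^ (q - r) := by
    intro a b p q r
    rw [mul_zpow, inv_zpow, ← zpow_neg, mul_mul_mul_comm, ← zpow_add, ← zpow_add,
      ← sub_eq_add_neg]
  rcases eq_or_ne s0 i with hsi | hsi
  · -- s0 = i, so s0 ≠ j : use the bound at j
    have hsj : s0 ≠ j := by omega
    have hj : uβ ^ ((j : ℤ) - i) * ut ^ (j : ℤ) < uγ ^ ((j : ℤ) - i) * ut ^ (s0 : ℤ) :=
      tounits uβ uγ j s0 (by simpa [huβ, huγ] using hstar j hjn hsj)
    have hid : uα ^ ((j : ℤ) - s0) * uβ ^ ((s0 : ℤ) - i) * ut ^ (s0 : ℤ)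
        = uβ ^ ((j : ℤ) - i) * ut ^ (j : ℤ) := by
      rw [hut, key, show uβ ^ ((j:ℤ)-i) * (uα * uβ⁻¹) ^ (j:ℤ) =
          uα ^ (0:ℤ) * uβ ^ ((j:ℤ)-i) * (uα * uβ⁻¹) ^ (j:ℤ) by rw [zpow_zero, one_mul], key,
        show (j:ℤ) - s0 + s0 = 0 + (j:ℤ) by ring,
        show (s0:ℤ) - i - s0 = (j:ℤ) - i - j by ring]
    have h2 : uγ ^ ((j : ℤ) - i) * ut ^ (s0 : ℤ) ≤ uβ ^ ((j : ℤ) - i) * ut ^ (j : ℤ) := by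
      calc uγ ^ ((j : ℤ) - i) * ut ^ (s0 : ℤ)
          ≤ uα ^ ((j : ℤ) - s0) * uβ ^ ((s0 : ℤ) - i) * ut ^ (s0 : ℤ) :=
            mul_le_mul_left hNu _
        _ = uβ ^ ((j : ℤ) - i) * ut ^ (j : ℤ) := hid
    exact absurd (lt_of_lt_of_le hj h2) (lt_irrefl _)
  · -- s0 ≠ i : use the bound at i
    have hiN : i ≤ n := by omega
    have hi : uα ^ ((j : ℤ) - i) * ut ^ (i : ℤ) < uγ ^ ((j : ℤ) - i) * ut ^ (s0 : ℤ) :=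
      tounits uα uγ i s0 (by simpa [huα, huγ] using hstar i hiN hsi)
    have hid : uα ^ ((j : ℤ) - s0) * uβ ^ ((s0 : ℤ) - i) * ut ^ (s0 : ℤ)
        = uα ^ ((j : ℤ) - i) * ut ^ (i : ℤ) := by
      rw [hut, key, show uα ^ ((j:ℤ)-i) * (uα * uβ⁻¹) ^ (i:ℤ) =
          uα ^ ((j:ℤ)-i) * uβ ^ (0:ℤ) * (uα * uβ⁻¹) ^ (i:ℤ) by rw [zpow_zero, mul_one], key,
        show (j:ℤ) - s0 + s0 = (j:ℤ) - i + i by ring,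
        show (s0:ℤ) - i - s0 = 0 - (i:ℤ) by ring]
    have h2 : uγ ^ ((j : ℤ) - i) * ut ^ (s0 : ℤ) ≤ uα ^ ((j : ℤ) - i) * ut ^ (i : ℤ) := by
      calc uγ ^ ((j : ℤ) - i) * ut ^ (s0 : ℤ)
          ≤ uα ^ ((j : ℤ) - s0) * uβ ^ ((s0 : ℤ) - i) * ut ^ (s0 : ℤ) :=
            mul_le_mul_left hNu _
        _ = uα ^ ((j : ℤ) - i) * ut ^ (i : ℤ) := hid
    exact absurd (lt_of_lt_of_le hi h2) (lt_irrefl _)
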